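/- Let R ⊆ S be an étale ring extension (flat, unramified, of finite presentation) with R a reduced commutative ring. Then S is reduced, and for every prime ideal P of R, the ideal PS is a radical ideal of S. -/

import Mathlib

open TensorProduct

universe u v

section Aux

variable (R : Type u) [CommRing R]

private def AuxQ : Type (max u v) :=
  Π p : minimalPrimes R, ULift.{v} (FractionRing (R ⧸ (p : Ideal R)))

noncomputable instance : CommRing (AuxQ.{u, v} R) :=
  inferInstanceAs (CommRing (Π p : minimalPrimes R, ULift.{v} (FractionRing (R ⧸ (p : Ideal R)))))

noncomputable instance : Algebra R (AuxQ.{u, v} R) :=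
  RingHom.toAlgebra (show R →+* Π p : minimalPrimes R, ULift.{v} (FractionRing (R ⧸ (p : Ideal R)))
    from Pi.ringHom fun p : minimalPrimes R =>
      (ULift.ringEquiv (R := FractionRing (R ⧸ (p : Ideal R)))).symm.toRingHom.comp
        ((algebraMap (R ⧸ (p : Ideal R)) (FractionRing (R ⧸ (p : Ideal R)))).comp
          (Ideal.Quotient.mk (p : Ideal R))))

private lemma auxQ_algebraMap_apply (r : R) (p : minimalPrimes R) :
    (show Π p : minimalPrimes R, ULift.{v} (FractionRing (R ⧸ (p : Ideal R)))
        from algebraMap R (AuxQ.{u, v} R) r) p =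
      ULift.up (algebraMap (R ⧸ (p : Ideal R)) (FractionRing (R ⧸ (p : Ideal R)))
        (Ideal.Quotient.mk (p : Ideal R) r)) := rfl

private lemma auxQ_injective [IsReduced R] :
    Function.Injective (algebraMap R (AuxQ.{u, v} R)) := by
  refine (injective_iff_map_eq_zero _).mpr fun r hr => ?_
  have hnil : r ∈ nilradical R := by
    rw [nilradical_eq_sInf, Submodule.mem_sInf]
    intro J hJ
    haveI : Ideal.IsPrime J := hJ
    obtain ⟨p, hp, hple⟩ := Ideal.exists_minimalPrimes_le (I := ⊥) (J := J) bot_le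
    have hpmem : p ∈ minimalPrimes R := hp
    haveI : p.IsPrime := hpmem.1.1
    have h0 := congrFun (congrArg
      (show AuxQ.{u, v} R →
          Π p : minimalPrimes R, ULift.{v} (FractionRing (R ⧸ (p : Ideal R))) from id) hr)
      ⟨p, hpmem⟩
    have h1 : algebraMap (R ⧸ p) (FractionRing (R ⧸ p)) (Ideal.Quotient.mk p r) = 0 :=
      congrArg ULift.down h0
    have h2 : Ideal.Quotient.mk p r = 0 := by
      apply IsFractionRing.injective (R ⧸ p) (FractionRing (R ⧸ p))
      rw [h1, map_zero]
    exact hple (Ideal.Quotient.eq_zero_iff_mem.mp h2)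
  exact (mem_nilradical.mp hnil).eq_zero

private lemma auxQ_vnr (a : AuxQ.{u, v} R) : ∃ b, a * a * b = a := by
  refine ⟨show Π p : minimalPrimes R, ULift.{v} (FractionRing (R ⧸ (p : Ideal R))) from
    fun p => letI : (p : Ideal R).IsPrime := p.2.1.1; ULift.up ((a p).down)⁻¹, ?_⟩
  show (fun p => a p * a p * _) = a
  funext p
  letI : (p : Ideal R).IsPrime := p.2.1.1
  apply ULift.down_injective
  show (a p).down * (a p).down * ((a p).down)⁻¹ = (a p).down
  rcases eq_or_ne (a p).down 0 with h | h
  · simp [h]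
  · rw [mul_assoc, mul_inv_cancel₀ h, mul_one]

end Aux

private theorem isReduced_of_flat_unramified (R : Type u) (S : Type v) [CommRing R] [CommRing S]
    [Algebra R S] [IsReduced R] [Module.Flat R S] [Algebra.FormallyUnramified R S]
    [Algebra.EssFiniteType R S] : IsReduced S := by
  classical
  have hredB : IsReduced (AuxQ.{u, v} R ⊗[R] S) := by
    refine isReduced_ofLocalizationMaximal _ (fun n hn => ?_)
    haveI := hn
    haveI : n.IsPrime := hn.isPrime
    set P : Ideal (AuxQ.{u, v} R) :=
      n.comap (algebraMap (AuxQ.{u, v} R) (AuxQ.{u, v} R ⊗[R] S)) with hPdef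
    haveI : P.IsPrime := Ideal.IsPrime.comap _
    have hK : IsField (Localization.AtPrime P) := by
      refine ⟨exists_pair_ne _, mul_comm, ?_⟩
      intro a ha
      obtain ⟨⟨q, s⟩, rfl⟩ := IsLocalization.mk'_surjective P.primeCompl a
      dsimp only at ha ⊢
      by_cases hq : q ∈ P
      · exfalso
        apply ha
        rw [IsLocalization.mk'_eq_zero_iff]
        obtain ⟨b, hb⟩ := auxQ_vnr R q
        refine ⟨⟨1 - q * b, fun hmem => ?_⟩, ?_⟩
        · exact (Ideal.IsPrime.ne_top ‹P.IsPrime›) ((Ideal.eq_top_iff_one P).mpr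
            (by simpa using Ideal.add_mem P hmem (Ideal.mul_mem_right b P hq)))
        · show (1 - q * b) * q = 0
          rw [sub_mul, one_mul]
          rw [show q * b * q = q * q * b by ring, hb, sub_self]
      · have h1 : IsUnit (algebraMap (AuxQ.{u, v} R) (Localization.AtPrime P) q) :=
          (IsLocalization.AtPrime.isUnit_to_map_iff (Localization.AtPrime P) P q).mpr hq
        have h2 := IsLocalization.mk'_spec (Localization.AtPrime P) q s
        have h3 : IsUnit (IsLocalization.mk' (Localization.AtPrime P) q s *
            algebraMap (AuxQ.{u, v} R) (Localization.AtPrime P) (s : AuxQ.{u, v} R)) := by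
          rw [h2]; exact h1
        obtain ⟨b, hb⟩ := (isUnit_of_mul_isUnit_left h3).exists_right_inv
        exact ⟨b, hb⟩
    letI : Field (Localization.AtPrime P) := hK.toField
    letI : Algebra (Localization.AtPrime P) (Localization.AtPrime n) :=
      (Localization.localRingHom P n
        (algebraMap (AuxQ.{u, v} R) (AuxQ.{u, v} R ⊗[R] S)) rfl).toAlgebra
    haveI : IsScalarTower (AuxQ.{u, v} R) (Localization.AtPrime P) (Localization.AtPrime n) :=
      IsScalarTower.of_algebraMap_eq' (by
        refine RingHom.ext fun x => ?_
        rw [IsScalarTower.algebraMap_apply (AuxQ.{u, v} R) (AuxQ.{u, v} R ⊗[R] S)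
          (Localization.AtPrime n)]
        exact (Localization.localRingHom_to_map P n _ rfl x).symm)
    haveI : Algebra.FormallyUnramified (AuxQ.{u, v} R ⊗[R] S) (Localization.AtPrime n) :=
      Algebra.FormallyUnramified.of_isLocalization n.primeCompl
    haveI : Algebra.FormallyUnramified (AuxQ.{u, v} R) (Localization.AtPrime n) :=
      Algebra.FormallyUnramified.comp (AuxQ.{u, v} R) (AuxQ.{u, v} R ⊗[R] S) _
    haveI : Algebra.FormallyUnramified (Localization.AtPrime P) (Localization.AtPrime n) :=
      Algebra.FormallyUnramified.of_restrictScalars (AuxQ.{u, v} R) _ _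
    haveI : Algebra.EssFiniteType (AuxQ.{u, v} R ⊗[R] S) (Localization.AtPrime n) :=
      Algebra.EssFiniteType.of_isLocalization _ n.primeCompl
    haveI : Algebra.EssFiniteType (AuxQ.{u, v} R) (Localization.AtPrime n) :=
      Algebra.EssFiniteType.comp (AuxQ.{u, v} R) (AuxQ.{u, v} R ⊗[R] S) _
    haveI : Algebra.EssFiniteType (Localization.AtPrime P) (Localization.AtPrime n) :=
      Algebra.EssFiniteType.of_comp (AuxQ.{u, v} R) _ _
    exact Algebra.FormallyUnramified.isReduced_of_field
      (Localization.AtPrime P) (Localization.AtPrime n)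
  let f := (Algebra.TensorProduct.includeRight (R := R) (A := AuxQ.{u, v} R) (B := S))
  have hf : Function.Injective f := by
    have hcoe : ⇑f = (LinearMap.rTensor S (Algebra.ofId R (AuxQ.{u, v} R)).toLinearMap).comp
        (TensorProduct.lid R S).symm.toLinearMap := by
      funext x
      simp [f]
    rw [hcoe, LinearMap.coe_comp]
    exact (Module.Flat.rTensor_preserves_injective_linearMap _
      (auxQ_injective R)).comp (TensorProduct.lid R S).symm.injective
  exact isReduced_of_injective f hf

/-- If `R ⊆ S` is étale with `R` reduced, then `S` is reduced and `PS` is radical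
for every prime `P` of `R`. -/
theorem etale_of_reduced_is_reduced
    (R S : Type*) [CommRing R] [CommRing S] [Algebra R S] [IsReduced R]
    (hinj : Function.Injective (algebraMap R S))
    [Module.Flat R S] (hfp : Algebra.FinitePresentation R S)
    (hunr : Subsingleton (Ω[S⁄R])) :
    IsReduced S ∧
      ∀ P : Ideal R, P.IsPrime → (P.map (algebraMap R S)).IsRadical := by
  haveI : Algebra.FormallyUnramified R S := ⟨hunr⟩
  haveI : Algebra.FinitePresentation R S := hfp
  refine ⟨isReduced_of_flat_unramified R S, fun P hP => ?_⟩
  haveI := hP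
  haveI : IsReduced (FractionRing (R ⧸ P) ⊗[R] S) :=
    isReduced_of_flat_unramified (FractionRing (R ⧸ P)) (FractionRing (R ⧸ P) ⊗[R] S)
  have hker : ∀ x : S,
      (Algebra.TensorProduct.includeRight (R := R) (A := FractionRing (R ⧸ P)) (B := S)) x = 0 →
      x ∈ P.map (algebraMap R S) := by
    intro x hx
    have hexact : Function.Exact (Submodule.subtype (P : Submodule R R))
        (Algebra.linearMap R (FractionRing (R ⧸ P))) := by
      rw [LinearMap.exact_iff, Submodule.range_subtype]
      ext r
      simp only [LinearMap.mem_ker, Algebra.linearMap_apply]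
      rw [IsScalarTower.algebraMap_apply R (R ⧸ P) (FractionRing (R ⧸ P)),
        map_eq_zero_iff _ (IsFractionRing.injective (R ⧸ P) (FractionRing (R ⧸ P))),
        Ideal.Quotient.algebraMap_eq]
      exact Ideal.Quotient.eq_zero_iff_mem
    have h2 := Module.Flat.rTensor_exact (M := S) hexact
    have h3 : (LinearMap.rTensor S (Algebra.linearMap R (FractionRing (R ⧸ P))))
        ((1 : R) ⊗ₜ[R] x) = 0 := by
      rw [LinearMap.rTensor_tmul]
      simpa using hx
    obtain ⟨y, hy⟩ := (h2 _).mp h3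
    have h4 : x = TensorProduct.lid R S
        (LinearMap.rTensor S (Submodule.subtype (P : Submodule R R)) y) := by
      rw [hy]; simp
    rw [h4]
    clear h4 hy h3
    induction y using TensorProduct.induction_on with
    | zero => simp
    | tmul p s =>
      simp only [LinearMap.rTensor_tmul, Submodule.coe_subtype, TensorProduct.lid_tmul,
        Algebra.smul_def]
      exact Ideal.mul_mem_right _ _ (Ideal.mem_map_of_mem _ p.2)
    | add a b ha hb =>
      simp only [map_add]
      exact Ideal.add_mem _ ha hb
  have hmapker : P.map (algebraMap R S) ≤ RingHom.ker (Algebra.TensorProduct.includeRight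
      (R := R) (A := FractionRing (R ⧸ P)) (B := S)).toRingHom := by
    rw [Ideal.map_le_iff_le_comap]
    intro p hp
    have h0 : algebraMap R (FractionRing (R ⧸ P)) p = 0 := by
      rw [IsScalarTower.algebraMap_apply R (R ⧸ P) (FractionRing (R ⧸ P)),
        Ideal.Quotient.algebraMap_eq, Ideal.Quotient.eq_zero_iff_mem.mpr hp, map_zero]
    have h1 : algebraMap R (FractionRing (R ⧸ P) ⊗[R] S) p = 0 := by
      rw [IsScalarTower.algebraMap_apply R (FractionRing (R ⧸ P)) (FractionRing (R ⧸ P) ⊗[R] S),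
        h0, map_zero]
    show algebraMap R S p ∈ RingHom.ker _
    rw [RingHom.mem_ker]
    show (Algebra.TensorProduct.includeRight
      (R := R) (A := FractionRing (R ⧸ P)) (B := S)) (algebraMap R S p) = 0
    rw [AlgHom.commutes, h1]
  let g : S ⧸ P.map (algebraMap R S) →+* FractionRing (R ⧸ P) ⊗[R] S :=
    Ideal.Quotient.lift _ (Algebra.TensorProduct.includeRight
      (R := R) (A := FractionRing (R ⧸ P)) (B := S)).toRingHom
      (fun a ha => RingHom.mem_ker.mp (hmapker ha))
  have hg : Function.Injective g := by
    refine (injective_iff_map_eq_zero _).mpr fun a ha => ?_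
    obtain ⟨x, rfl⟩ := Ideal.Quotient.mk_surjective a
    rw [show (Ideal.Quotient.mk (P.map (algebraMap R S))) x = 0 ↔ _ from
      Ideal.Quotient.eq_zero_iff_mem]
    refine hker x ?_
    simpa [g, Ideal.Quotient.lift_mk] using ha
  haveI : IsReduced (S ⧸ P.map (algebraMap R S)) := isReduced_of_injective g hg
  exact (Ideal.isRadical_iff_quotient_reduced _).mpr ‹_›
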